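/- With $L$, $v=ac\,e_1+bc\,e_2+abc^2f_1+f_2$, $\alpha=e_1+bc\,f_1$, $\beta=e_2+ac\,f_1$, $t=-abc^2f_1+f_2$ as above: in the quotient lattice $v^\perp/\mathbb{Z}v$, the classes $\bar\alpha,\bar\beta$ form a basis, the induced bilinear form satisfies $\bar\alpha^2=\bar\beta^2=0$ and $\bar\alpha\cdot\bar\beta=-1$ (so $v^\perp/\mathbb{Z}v$ is a hyperbolic plane), and $\bar t=-ac\,\bar\alpha-bc\,\bar\beta$. -/
import Mathlib


/-- The bilinear form of `U⁽¹⁾ ⊕ U⁽²⁾`. -/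
def BU (x y : Fin 4 → ℤ) : ℤ :=
  -(x 0 * y 1) - x 1 * y 0 + x 2 * y 3 + x 3 * y 2

/-- In `v^⊥/ℤv` the classes of `α, β` form a basis, the induced form is the
hyperbolic plane (`ᾱ² = β̄² = 0`, `ᾱ·β̄ = -1`), and `t̄ = -ac·ᾱ - bc·β̄`. -/
theorem stmt4 (a b c : ℕ) (ha : 1 ≤ a) (hb : 1 ≤ b) (hc : 1 ≤ c)
    (v α β t : Fin 4 → ℤ)
    (hv : v = ![(a * c : ℤ), b * c, a * b * c ^ 2, 1])
    (hα : α = ![1, 0, (b * c : ℤ), 0])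
    (hβ : β = ![0, 1, (a * c : ℤ), 0])
    (ht : t = ![0, 0, (-(a * b * c ^ 2) : ℤ), 1]) :
    -- `α, β, v` lie in `v^⊥` and `ᾱ, β̄` is a basis of `v^⊥/ℤv`:
    BU α v = 0 ∧ BU β v = 0 ∧ BU v v = 0 ∧
    (∀ ξ : Fin 4 → ℤ, BU ξ v = 0 →
      ∃ x y k : ℤ, ξ = fun i => x * α i + y * β i + k * v i) ∧
    (∀ x y k : ℤ, (fun i => x * α i + y * β i + k * v i) = (0 : Fin 4 → ℤ) →
      x = 0 ∧ y = 0 ∧ k = 0) ∧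
    -- the induced bilinear form is a hyperbolic plane:
    BU α α = 0 ∧ BU β β = 0 ∧ BU α β = -1 ∧
    -- `t̄ = -ac·ᾱ - bc·β̄`, i.e. `t + ac·α + bc·β ∈ ℤv`:
    (∃ k : ℤ, (fun i => t i + (a * c : ℤ) * α i + (b * c : ℤ) * β i)
      = fun i => k * v i) := by
  subst hv hα hβ ht
  refine ⟨by simp [BU], by simp [BU], by (simp [BU]; ring), ?_, ?_,
    by simp [BU], by simp [BU], by simp [BU], 1, ?_⟩
  · intro ξ hξ
    simp only [BU, Matrix.cons_val_zero, Matrix.cons_val_one, Matrix.head_cons,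
      Matrix.cons_val_two, Matrix.tail_cons, Matrix.cons_val_three] at hξ
    refine ⟨ξ 0 - a * c * ξ 3, ξ 1 - b * c * ξ 3, ξ 3, ?_⟩
    funext i
    fin_cases i <;> simp <;> linarith [hξ]
  · intro x y k h
    have h0 := congrFun h 0
    have h1 := congrFun h 1
    have h3 := congrFun h 3
    simp at h0 h1 h3
    subst h3
    refine ⟨by linarith [h0], by linarith [h1], rfl⟩
  · funext i; fin_cases i <;> simp <;> ring
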